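/- If an unbiased sampling scheme Φ minimizes both the sum of individual variances ΣV and the variance of the total VΣ over all unbiased schemes using at most k expected samples, then for every subset size m, Φ minimizes V_m over all such schemes; similarly Φ minimizes W_p for every p ∈ [0,1]. -/

import Mathlib

open MeasureTheory ProbabilityTheory Finset

/-- Sum of individual variances `ΣV` of a sampling scheme. -/
noncomputable def sumVar {Ω : Type*} [MeasurableSpace Ω] (μ : MeasureTheory.Measure Ω)
    {n : ℕ} (f : Fin n → Ω → ℝ) : ℝ :=
  ∑ i, ProbabilityTheory.variance (f i) μ

/-- Variance of the total `VΣ` of a sampling scheme. -/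
noncomputable def varSum {Ω : Type*} [MeasurableSpace Ω] (μ : MeasureTheory.Measure Ω)
    {n : ℕ} (f : Fin n → Ω → ℝ) : ℝ :=
  ProbabilityTheory.variance (fun ω => ∑ i, f i ω) μ

/-- `V_m`: average variance of the subset-sum estimate over uniformly random
subsets of size `m`. -/
noncomputable def Vm {Ω : Type*} [MeasurableSpace Ω] (μ : MeasureTheory.Measure Ω)
    {n : ℕ} (f : Fin n → Ω → ℝ) (m : ℕ) : ℝ :=
  (∑ I ∈ (Finset.univ : Finset (Fin n)).powersetCard m,
      ProbabilityTheory.variance (fun ω => ∑ i ∈ I, f i ω) μ) / (n.choose m : ℝ)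

/-- `W_p`: expected variance of the subset-sum estimate over random subsets
including each item independently with probability `p`. -/
noncomputable def Wp {Ω : Type*} [MeasurableSpace Ω] (μ : MeasureTheory.Measure Ω)
    {n : ℕ} (f : Fin n → Ω → ℝ) (p : ℝ) : ℝ :=
  ∑ I ∈ (Finset.univ : Finset (Fin n)).powerset,
    p ^ I.card * (1 - p) ^ (n - I.card) *
      ProbabilityTheory.variance (fun ω => ∑ i ∈ I, f i ω) μ

/-- A scheme is unbiased for weights `w` if each estimator has mean `w i`. -/
def UnbiasedScheme {Ω : Type*} [MeasurableSpace Ω] (μ : MeasureTheory.Measure Ω)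
    {n : ℕ} (f : Fin n → Ω → ℝ) (w : Fin n → ℝ) : Prop :=
  ∀ i, ∫ ω, f i ω ∂μ = w i

open scoped Classical in
/-- Expected number of samples: expected number of nonzero estimates. -/
noncomputable def expSamples {Ω : Type*} [MeasurableSpace Ω] (μ : MeasureTheory.Measure Ω)
    {n : ℕ} (f : Fin n → Ω → ℝ) : ℝ :=
  ∫ ω, ((Finset.univ.filter (fun i : Fin n => f i ω ≠ 0)).card : ℝ) ∂μ


section Aux

variable {Ω : Type*} [MeasurableSpace Ω] {μ : MeasureTheory.Measure Ω}

/-- covariance -/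
noncomputable def mycov (μ : MeasureTheory.Measure Ω) (X Y : Ω → ℝ) : ℝ :=
  ∫ ω, (X ω - ∫ ω', X ω' ∂μ) * (Y ω - ∫ ω', Y ω' ∂μ) ∂μ

lemma l2_mul_integrable {X Y : Ω → ℝ} (hX : MeasureTheory.MemLp X 2 μ)
    (hY : MeasureTheory.MemLp Y 2 μ) : MeasureTheory.Integrable (fun ω => X ω * Y ω) μ := by
  have h : MeasureTheory.Integrable
      (fun ω => (((X ω + Y ω) ^ 2 - X ω ^ 2) - Y ω ^ 2) / 2) μ :=
    (((hX.add hY).integrable_sq.sub hX.integrable_sq).sub hY.integrable_sq).div_const 2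
  convert h using 2 with ω
  ring

lemma var_eq_sum_mycov [MeasureTheory.IsProbabilityMeasure μ] {n : ℕ} (f : Fin n → Ω → ℝ)
    (hf : ∀ i, MeasureTheory.MemLp (f i) 2 μ) (I : Finset (Fin n)) :
    ProbabilityTheory.variance (fun ω => ∑ i ∈ I, f i ω) μ
      = ∑ i ∈ I, ∑ j ∈ I, mycov μ (f i) (f j) := by
  have hs : MeasureTheory.MemLp (fun ω => ∑ i ∈ I, f i ω) 2 μ := by
    have h := memLp_finset_sum' I (fun i _ => hf i)
    rwa [show (∑ i ∈ I, f i) = (fun ω => ∑ i ∈ I, f i ω) from funext fun ω => by simp] at h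
  have hgmem : ∀ i : Fin n, MeasureTheory.MemLp
      (fun ω => f i ω - ∫ ω', f i ω' ∂μ) 2 μ := fun i =>
    (hf i).sub (memLp_const _)
  have hprod : ∀ i j : Fin n, MeasureTheory.Integrable
      (fun ω => (f i ω - ∫ ω', f i ω' ∂μ) * (f j ω - ∫ ω', f j ω' ∂μ)) μ :=
    fun i j => l2_mul_integrable (hgmem i) (hgmem j)
  rw [variance_eq_integral hs.aestronglyMeasurable.aemeasurable]
  have hE : ∫ ω, ∑ i ∈ I, f i ω ∂μ = ∑ i ∈ I, ∫ ω, f i ω ∂μ :=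
    integral_finset_sum I (fun i _ => (hf i).integrable one_le_two)
  trans (∫ ω, ∑ i ∈ I, ∑ j ∈ I,
      (f i ω - ∫ ω', f i ω' ∂μ) * (f j ω - ∫ ω', f j ω' ∂μ) ∂μ)
  · refine integral_congr_ae (Filter.Eventually.of_forall fun ω => ?_)
    simp only [Pi.pow_apply, Pi.sub_apply]
    rw [hE, ← Finset.sum_sub_distrib, pow_two, Finset.sum_mul_sum]
  · rw [integral_finset_sum I
      (fun i _ => integrable_finset_sum I (fun j _ => hprod i j))]
    exact Finset.sum_congr rfl fun i _ =>
      integral_finset_sum I (fun j _ => hprod i j)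

lemma sumVar_eq {Ω : Type*} [MeasurableSpace Ω] {μ : MeasureTheory.Measure Ω}
    [MeasureTheory.IsProbabilityMeasure μ] {n : ℕ} (f : Fin n → Ω → ℝ)
    (hf : ∀ i, MeasureTheory.MemLp (f i) 2 μ) :
    (∑ i, ProbabilityTheory.variance (f i) μ) = ∑ i, mycov μ (f i) (f i) := by
  refine Finset.sum_congr rfl fun i _ => ?_
  rw [variance_eq_integral (hf i).aestronglyMeasurable.aemeasurable]
  refine integral_congr_ae (Filter.Eventually.of_forall fun ω => ?_)
  simp only [Pi.pow_apply, Pi.sub_apply, pow_two]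

end Aux

section Comb

variable {n : ℕ}

lemma swap_lemma (S : Finset (Finset (Fin n))) (wt : Finset (Fin n) → ℝ)
    (c : Fin n → Fin n → ℝ) :
    ∑ I ∈ S, wt I * (∑ i ∈ I, ∑ j ∈ I, c i j)
      = ∑ i, ∑ j, (∑ I ∈ S.filter (fun I => i ∈ I ∧ j ∈ I), wt I) * c i j := by
  have expand : ∀ (I : Finset (Fin n)) (g : Fin n → ℝ),
      ∑ i ∈ I, g i = ∑ i : Fin n, if i ∈ I then g i else 0 := by
    intro I g
    rw [Finset.sum_ite_mem, Finset.univ_inter]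
  calc ∑ I ∈ S, wt I * (∑ i ∈ I, ∑ j ∈ I, c i j)
      = ∑ I ∈ S, ∑ i : Fin n, ∑ j : Fin n,
          (if i ∈ I ∧ j ∈ I then wt I * c i j else 0) := by
        refine Finset.sum_congr rfl fun I _ => ?_
        rw [Finset.mul_sum, expand I (fun i => wt I * ∑ j ∈ I, c i j)]
        refine Finset.sum_congr rfl fun i _ => ?_
        by_cases hi : i ∈ I
        · simp only [hi, if_true, true_and, Finset.mul_sum]
          rw [expand I (fun j => wt I * c i j)]
        · simp [hi]
    _ = ∑ i : Fin n, ∑ j : Fin n, ∑ I ∈ S,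
          (if i ∈ I ∧ j ∈ I then wt I * c i j else 0) := by
        rw [Finset.sum_comm]
        exact Finset.sum_congr rfl fun i _ => Finset.sum_comm
    _ = ∑ i, ∑ j, (∑ I ∈ S.filter (fun I => i ∈ I ∧ j ∈ I), wt I) * c i j := by
        refine Finset.sum_congr rfl fun i _ => Finset.sum_congr rfl fun j _ => ?_
        rw [Finset.sum_mul, Finset.sum_filter]

lemma sum_superset_powerset (s : Finset (Fin n)) (F : Finset (Fin n) → ℝ) :
    ∑ I ∈ (Finset.univ.powerset.filter (fun I => s ⊆ I)), F I
      = ∑ J ∈ (Finset.univ \ s).powerset, F (J ∪ s) := by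
  refine Finset.sum_nbij' (fun I => I \ s) (fun J => J ∪ s) ?_ ?_ ?_ ?_ ?_
  · intro I hI
    simp only [Finset.mem_filter, Finset.mem_powerset] at hI ⊢
    exact Finset.sdiff_subset_sdiff hI.1 le_rfl
  · intro J hJ
    simp only [Finset.mem_filter, Finset.mem_powerset]
    exact ⟨Finset.subset_univ _, Finset.subset_union_right⟩
  · intro I hI
    simp only [Finset.mem_filter, Finset.mem_powerset] at hI
    exact Finset.sdiff_union_of_subset hI.2
  · intro J hJ
    simp only [Finset.mem_powerset, Finset.subset_sdiff] at hJ
    exact Finset.union_sdiff_cancel_right hJ.2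
  · intro I hI
    simp only [Finset.mem_filter, Finset.mem_powerset] at hI
    rw [Finset.sdiff_union_of_subset hI.2]

lemma binom_one (t : Finset (Fin n)) (p : ℝ) :
    ∑ J ∈ t.powerset, p ^ J.card * (1 - p) ^ (t.card - J.card) = 1 := by
  have h := Finset.prod_add (fun _ : Fin n => p) (fun _ : Fin n => 1 - p) t
  simp only [Finset.prod_const] at h
  rw [show p + (1 - p) = 1 by ring, one_pow] at h
  refine Eq.trans (Finset.sum_congr rfl fun J hJ => ?_) h.symm
  rw [Finset.card_sdiff_of_subset (Finset.mem_powerset.mp hJ)]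

lemma wp_weight (p : ℝ) (s : Finset (Fin n)) :
    ∑ I ∈ Finset.univ.powerset.filter (fun I => s ⊆ I),
        p ^ I.card * (1 - p) ^ (n - I.card) = p ^ s.card := by
  rw [sum_superset_powerset]
  have hcompl : (Finset.univ \ s).card = n - s.card := by
    rw [Finset.card_sdiff_of_subset (Finset.subset_univ s), Finset.card_univ, Fintype.card_fin]
  calc ∑ J ∈ (Finset.univ \ s).powerset, p ^ (J ∪ s).card * (1 - p) ^ (n - (J ∪ s).card)
      = ∑ J ∈ (Finset.univ \ s).powerset,
          p ^ s.card * (p ^ J.card * (1 - p) ^ ((Finset.univ \ s).card - J.card)) := by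
        refine Finset.sum_congr rfl fun J hJ => ?_
        have hJd : Disjoint J s := (Finset.subset_sdiff.mp (Finset.mem_powerset.mp hJ)).2
        have hJu : J ⊆ Finset.univ \ s := Finset.mem_powerset.mp hJ
        have hcard : (J ∪ s).card = J.card + s.card := Finset.card_union_of_disjoint hJd
        have hJle : J.card ≤ n - s.card := hcompl ▸ Finset.card_le_card hJu
        rw [hcard, pow_add, hcompl]
        rw [show n - (J.card + s.card) = n - s.card - J.card by omega]
        ring
    _ = p ^ s.card := by
        rw [← Finset.mul_sum, binom_one, mul_one]

lemma card_superset_powersetCard (m : ℕ) (s : Finset (Fin n)) (hs : s.card ≤ m) :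
    (((Finset.univ : Finset (Fin n)).powersetCard m).filter (fun I => s ⊆ I)).card
      = (n - s.card).choose (m - s.card) := by
  have : (((Finset.univ : Finset (Fin n)).powersetCard m).filter (fun I => s ⊆ I)).card
      = ((Finset.univ \ s).powersetCard (m - s.card)).card := by
    refine Finset.card_nbij' (fun I => I \ s) (fun J => J ∪ s) ?_ ?_ ?_ ?_
    · intro I hI
      simp only [Finset.mem_coe, Finset.mem_filter, Finset.mem_powersetCard] at hI ⊢
      refine ⟨Finset.sdiff_subset_sdiff hI.1.1 le_rfl, ?_⟩
      rw [Finset.card_sdiff_of_subset hI.2, hI.1.2]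
    · intro J hJ
      simp only [Finset.mem_coe, Finset.mem_filter, Finset.mem_powersetCard, Finset.subset_sdiff] at hJ ⊢
      have hd : Disjoint J s := hJ.1.2
      refine ⟨⟨Finset.subset_univ _, ?_⟩, Finset.subset_union_right⟩
      rw [Finset.card_union_of_disjoint hd, hJ.2]
      omega
    · intro I hI
      simp only [Finset.mem_coe, Finset.mem_filter, Finset.mem_powersetCard] at hI
      exact Finset.sdiff_union_of_subset hI.2
    · intro J hJ
      simp only [Finset.mem_coe, Finset.mem_powersetCard, Finset.subset_sdiff] at hJ
      exact Finset.union_sdiff_cancel_right hJ.1.2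
  rw [this, Finset.card_powersetCard, Finset.card_sdiff_of_subset (Finset.subset_univ s),
    Finset.card_univ, Fintype.card_fin]

lemma card_superset_powersetCard_zero (m : ℕ) (s : Finset (Fin n)) (hs : m < s.card) :
    (((Finset.univ : Finset (Fin n)).powersetCard m).filter (fun I => s ⊆ I)).card = 0 := by
  rw [Finset.card_eq_zero, Finset.filter_eq_empty_iff]
  intro I hI hsub
  rw [Finset.mem_powersetCard] at hI
  have := Finset.card_le_card hsub
  omega

lemma sum_ite_diag (A B : ℝ) (c : Fin n → Fin n → ℝ) :
    ∑ i, ∑ j, (if i = j then A else B) * c i j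
      = (A - B) * (∑ i, c i i) + B * (∑ i, ∑ j, c i j) := by
  have key : ∀ i : Fin n, ∑ j, (if i = j then A else B) * c i j
      = (A - B) * c i i + B * ∑ j, c i j := by
    intro i
    calc ∑ j, (if i = j then A else B) * c i j
        = ∑ j, ((if i = j then (A - B) * c i i else 0) + B * c i j) := by
          refine Finset.sum_congr rfl fun j _ => ?_
          by_cases h : i = j
          · subst h; simp only [if_pos rfl, ite_true, eq_self_iff_true]; ring
          · simp [h]
      _ = (∑ j, if i = j then (A - B) * c i i else 0) + ∑ j, B * c i j :=
          Finset.sum_add_distrib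
      _ = (A - B) * c i i + B * ∑ j, c i j := by
          rw [Finset.sum_ite_eq, if_pos (Finset.mem_univ i), Finset.mul_sum]
  calc ∑ i, ∑ j, (if i = j then A else B) * c i j
      = ∑ i, ((A - B) * c i i + B * ∑ j, c i j) :=
        Finset.sum_congr rfl fun i _ => key i
    _ = (A - B) * (∑ i, c i i) + B * (∑ i, ∑ j, c i j) := by
        rw [Finset.sum_add_distrib, ← Finset.mul_sum, ← Finset.mul_sum]

lemma gen_decomp (S : Finset (Finset (Fin n))) (wt : Finset (Fin n) → ℝ)
    (c : Fin n → Fin n → ℝ) (A B : ℝ)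
    (hA : ∀ i : Fin n, ∑ I ∈ S.filter (fun I => i ∈ I ∧ i ∈ I), wt I = A)
    (hB : ∀ i j : Fin n, i ≠ j → ∑ I ∈ S.filter (fun I => i ∈ I ∧ j ∈ I), wt I = B) :
    ∑ I ∈ S, wt I * (∑ i ∈ I, ∑ j ∈ I, c i j)
      = (A - B) * (∑ i, c i i) + B * (∑ i, ∑ j, c i j) := by
  rw [swap_lemma]
  rw [show (∑ i, ∑ j, (∑ I ∈ S.filter (fun I => i ∈ I ∧ j ∈ I), wt I) * c i j)
      = ∑ i, ∑ j, (if i = j then A else B) * c i j from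
    Finset.sum_congr rfl fun i _ => Finset.sum_congr rfl fun j _ => by
      by_cases h : i = j
      · subst h; rw [hA i, if_pos rfl]
      · rw [hB i j h, if_neg h]]
  exact sum_ite_diag A B c

end Comb

section Decomp

noncomputable def vmB (n m : ℕ) : ℝ := if 2 ≤ m then (((n - 2).choose (m - 2) : ℕ) : ℝ) else 0

lemma vmB_nonneg (n m : ℕ) : 0 ≤ vmB n m := by
  unfold vmB; split
  · exact Nat.cast_nonneg _
  · exact le_refl 0

lemma vmB_le (n m : ℕ) (hn : 2 ≤ n) (hm1 : 1 ≤ m) :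
    vmB n m ≤ (((n - 1).choose (m - 1) : ℕ) : ℝ) := by
  unfold vmB; split
  · rename_i hm2
    have h1 : n - 1 = (n - 2) + 1 := by omega
    have h2 : m - 1 = (m - 2) + 1 := by omega
    refine Nat.cast_le.mpr ?_
    rw [h1, h2, Nat.choose_succ_succ]
    exact Nat.le_add_right _ _
  · exact Nat.cast_nonneg _

lemma Vm_decomp {Ω : Type*} [MeasurableSpace Ω] (μ : MeasureTheory.Measure Ω)
    [MeasureTheory.IsProbabilityMeasure μ] {n : ℕ} (m : ℕ) (hm1 : 1 ≤ m)
    (f : Fin n → Ω → ℝ) (hf : ∀ i, MeasureTheory.MemLp (f i) 2 μ) :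
    Vm μ f m = (((((n - 1).choose (m - 1) : ℕ) : ℝ) - vmB n m) * sumVar μ f
        + vmB n m * varSum μ f) / (n.choose m : ℝ) := by
  have hA : ∀ i : Fin n,
      ∑ I ∈ ((Finset.univ : Finset (Fin n)).powersetCard m).filter
        (fun I => i ∈ I ∧ i ∈ I), (fun _ : Finset (Fin n) => (1:ℝ)) I
      = (((n - 1).choose (m - 1) : ℕ) : ℝ) := by
    intro i
    rw [Finset.filter_congr
      (fun I _ => show (i ∈ I ∧ i ∈ I) ↔ ({i} : Finset (Fin n)) ⊆ I by simp)]
    rw [Finset.sum_const, nsmul_eq_mul, mul_one,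
      card_superset_powersetCard m {i} (by simpa using hm1)]
    simp
  have hB : ∀ i j : Fin n, i ≠ j →
      ∑ I ∈ ((Finset.univ : Finset (Fin n)).powersetCard m).filter
        (fun I => i ∈ I ∧ j ∈ I), (fun _ : Finset (Fin n) => (1:ℝ)) I
      = vmB n m := by
    intro i j hij
    rw [Finset.filter_congr (fun I _ =>
      show (i ∈ I ∧ j ∈ I) ↔ ({i, j} : Finset (Fin n)) ⊆ I by
        simp [Finset.insert_subset_iff])]
    rw [Finset.sum_const, nsmul_eq_mul, mul_one]
    unfold vmB
    by_cases hm2 : 2 ≤ m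
    · rw [if_pos hm2, card_superset_powersetCard m {i, j}
        (by rw [Finset.card_pair hij]; exact hm2)]
      rw [Finset.card_pair hij]
    · rw [if_neg hm2, card_superset_powersetCard_zero m {i, j}
        (by rw [Finset.card_pair hij]; omega)]
      simp
  simp only [Vm]
  rw [show (∑ I ∈ (Finset.univ : Finset (Fin n)).powersetCard m,
      ProbabilityTheory.variance (fun ω => ∑ i ∈ I, f i ω) μ)
      = ∑ I ∈ (Finset.univ : Finset (Fin n)).powersetCard m,
        (fun _ : Finset (Fin n) => (1:ℝ)) I * (∑ i ∈ I, ∑ j ∈ I, mycov μ (f i) (f j)) from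
    Finset.sum_congr rfl fun I _ => by rw [var_eq_sum_mycov f hf I, one_mul]]
  rw [gen_decomp _ _ _ _ _ hA hB]
  rw [sumVar, varSum, sumVar_eq f hf, var_eq_sum_mycov f hf Finset.univ]

lemma Wp_decomp {Ω : Type*} [MeasurableSpace Ω] (μ : MeasureTheory.Measure Ω)
    [MeasureTheory.IsProbabilityMeasure μ] {n : ℕ} (p : ℝ)
    (f : Fin n → Ω → ℝ) (hf : ∀ i, MeasureTheory.MemLp (f i) 2 μ) :
    Wp μ f p = (p - p ^ 2) * sumVar μ f + p ^ 2 * varSum μ f := by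
  have hA : ∀ i : Fin n,
      ∑ I ∈ ((Finset.univ : Finset (Fin n)).powerset).filter
        (fun I => i ∈ I ∧ i ∈ I),
        (fun I : Finset (Fin n) => p ^ I.card * (1 - p) ^ (n - I.card)) I = p := by
    intro i
    rw [Finset.filter_congr
      (fun I _ => show (i ∈ I ∧ i ∈ I) ↔ ({i} : Finset (Fin n)) ⊆ I by simp)]
    rw [wp_weight p {i}, Finset.card_singleton, pow_one]
  have hB : ∀ i j : Fin n, i ≠ j →
      ∑ I ∈ ((Finset.univ : Finset (Fin n)).powerset).filter
        (fun I => i ∈ I ∧ j ∈ I),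
        (fun I : Finset (Fin n) => p ^ I.card * (1 - p) ^ (n - I.card)) I = p ^ 2 := by
    intro i j hij
    rw [Finset.filter_congr (fun I _ =>
      show (i ∈ I ∧ j ∈ I) ↔ ({i, j} : Finset (Fin n)) ⊆ I by
        simp [Finset.insert_subset_iff])]
    rw [wp_weight p {i, j}, Finset.card_pair hij]
  simp only [Wp]
  rw [show (∑ I ∈ (Finset.univ : Finset (Fin n)).powerset,
      p ^ I.card * (1 - p) ^ (n - I.card) *
        ProbabilityTheory.variance (fun ω => ∑ i ∈ I, f i ω) μ)
      = ∑ I ∈ (Finset.univ : Finset (Fin n)).powerset,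
        (fun I : Finset (Fin n) => p ^ I.card * (1 - p) ^ (n - I.card)) I
          * (∑ i ∈ I, ∑ j ∈ I, mycov μ (f i) (f j)) from
    Finset.sum_congr rfl fun I _ => by rw [var_eq_sum_mycov f hf I]]
  rw [gen_decomp _ _ _ _ _ hA hB]
  rw [sumVar, varSum, sumVar_eq f hf, var_eq_sum_mycov f hf Finset.univ]

end Decomp

/-- If an unbiased scheme `f` simultaneously minimizes `ΣV` and `VΣ` among all
unbiased schemes using an expected number of at most `k` samples, then it
minimizes `V_m` for every subset size `1 ≤ m ≤ n` and `W_p` for every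
`p ∈ [0,1]` among all such schemes. -/
theorem min_sumVar_varSum_implies_min_Vm_Wp
    {Ω : Type*} [MeasurableSpace Ω] (μ : MeasureTheory.Measure Ω)
    [MeasureTheory.IsProbabilityMeasure μ]
    (n : ℕ) (hn : 2 ≤ n) (k : ℝ) (w : Fin n → ℝ)
    (f : Fin n → Ω → ℝ)
    (hf2 : ∀ i, MeasureTheory.MemLp (f i) 2 μ)
    (hfu : UnbiasedScheme μ f w)
    (hfk : expSamples μ f ≤ k)
    (hminSV : ∀ (Ω' : Type) (_ : MeasurableSpace Ω') (μ' : MeasureTheory.Measure Ω'),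
      MeasureTheory.IsProbabilityMeasure μ' → ∀ g : Fin n → Ω' → ℝ,
        (∀ i, MeasureTheory.MemLp (g i) 2 μ') → UnbiasedScheme μ' g w →
          expSamples μ' g ≤ k → sumVar μ f ≤ sumVar μ' g)
    (hminVS : ∀ (Ω' : Type) (_ : MeasurableSpace Ω') (μ' : MeasureTheory.Measure Ω'),
      MeasureTheory.IsProbabilityMeasure μ' → ∀ g : Fin n → Ω' → ℝ,
        (∀ i, MeasureTheory.MemLp (g i) 2 μ') → UnbiasedScheme μ' g w →
          expSamples μ' g ≤ k → varSum μ f ≤ varSum μ' g) :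
    (∀ m : ℕ, 1 ≤ m → m ≤ n →
      ∀ (Ω' : Type) (_ : MeasurableSpace Ω') (μ' : MeasureTheory.Measure Ω'),
        MeasureTheory.IsProbabilityMeasure μ' → ∀ g : Fin n → Ω' → ℝ,
          (∀ i, MeasureTheory.MemLp (g i) 2 μ') → UnbiasedScheme μ' g w →
            expSamples μ' g ≤ k → Vm μ f m ≤ Vm μ' g m)
    ∧ (∀ p : ℝ, 0 ≤ p → p ≤ 1 →
      ∀ (Ω' : Type) (_ : MeasurableSpace Ω') (μ' : MeasureTheory.Measure Ω'),
        MeasureTheory.IsProbabilityMeasure μ' → ∀ g : Fin n → Ω' → ℝ,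
          (∀ i, MeasureTheory.MemLp (g i) 2 μ') → UnbiasedScheme μ' g w →
            expSamples μ' g ≤ k → Wp μ f p ≤ Wp μ' g p) := by
  constructor
  · intro m hm1 hmn Ω' mΩ' μ' hμ' g hg2 hgu hgk
    rw [Vm_decomp μ m hm1 f hf2, Vm_decomp μ' m hm1 g hg2]
    have hC : (0:ℝ) < (n.choose m : ℝ) := by exact_mod_cast Nat.choose_pos hmn
    rw [div_le_div_iff_of_pos_right hC]
    have hSV := hminSV Ω' mΩ' μ' hμ' g hg2 hgu hgk
    have hVS := hminVS Ω' mΩ' μ' hμ' g hg2 hgu hgk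
    have ha : 0 ≤ ((((n - 1).choose (m - 1) : ℕ) : ℝ)) - vmB n m :=
      sub_nonneg.mpr (vmB_le n m hn hm1)
    have hb := vmB_nonneg n m
    exact add_le_add (mul_le_mul_of_nonneg_left hSV ha) (mul_le_mul_of_nonneg_left hVS hb)
  · intro p hp0 hp1 Ω' mΩ' μ' hμ' g hg2 hgu hgk
    rw [Wp_decomp μ p f hf2, Wp_decomp μ' p g hg2]
    have hSV := hminSV Ω' mΩ' μ' hμ' g hg2 hgu hgk
    have hVS := hminVS Ω' mΩ' μ' hμ' g hg2 hgu hgk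
    have ha : 0 ≤ p - p ^ 2 := by nlinarith
    have hb : 0 ≤ p ^ 2 := sq_nonneg p
    exact add_le_add (mul_le_mul_of_nonneg_left hSV ha) (mul_le_mul_of_nonneg_left hVS hb)
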